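/- arXiv:2102.01471 — 2 statements merged into one kernel-verified Lean document; each statement's English description precedes it below -/
import Mathlib

section
/- Let (F, σ) be a difference field whose constant field K = const(F, σ) has characteristic 0, let f ∈ F, and let F[s] be the polynomial ring in one variable s with σ extended to a ring automorphism of F[s] by σ(s) = s + f. Then const(F[s], σ) = K if and only if there is no g ∈ F with σ(g) − g = f. -/
open Polynomial

private lemma sigma_eq_comp
    (F : Type*) [Field F] (σ : F ≃+* F) (f : F)
    (σ' : Polynomial F ≃+* Polynomial F)
    (hC : ∀ a : F, σ' (Polynomial.C a) = Polynomial.C (σ a))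
    (hX : σ' Polynomial.X = Polynomial.X + Polynomial.C f) :
    ∀ p : Polynomial F, σ' p = (p.map (σ : F →+* F)).comp (X + C f) := by
  have h : (σ' : Polynomial F →+* Polynomial F)
      = ((compRingHom (X + C f)).comp (mapRingHom (σ : F →+* F))) := by
    apply ringHom_ext
    · intro a
      simp [hC]
    · simpa using hX
  intro p
  exact DFunLike.congr_fun h p

private lemma sigma_deriv
    (F : Type*) [Field F] (σ : F ≃+* F) (f : F)
    (σ' : Polynomial F ≃+* Polynomial F)
    (hC : ∀ a : F, σ' (Polynomial.C a) = Polynomial.C (σ a))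
    (hX : σ' Polynomial.X = Polynomial.X + Polynomial.C f) :
    ∀ p : Polynomial F, derivative (σ' p) = σ' (derivative p) := by
  intro p
  rw [sigma_eq_comp F σ f σ' hC hX p, sigma_eq_comp F σ f σ' hC hX (derivative p),
    derivative_comp, derivative_map]
  simp [mul_comm]

theorem sigma_extension_criterion
    (F : Type*) [Field F] [CharZero F] (σ : F ≃+* F) (f : F)
    (σ' : Polynomial F ≃+* Polynomial F)
    (hC : ∀ a : F, σ' (Polynomial.C a) = Polynomial.C (σ a))
    (hX : σ' Polynomial.X = Polynomial.X + Polynomial.C f) :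
    ({p : Polynomial F | σ' p = p}
        = Polynomial.C '' {c : F | σ c = c})
      ↔ ¬∃ g : F, σ g - g = f := by
  constructor
  · rintro h ⟨g, hg⟩
    have hp : σ' (X - C g) = X - C g := by
      rw [map_sub, hX, hC]
      have : σ g = g + f := by linear_combination hg
      rw [this, map_add]
      ring
    have : (X - C g : Polynomial F) ∈ Polynomial.C '' {c : F | σ c = c} := by
      rw [← h]; exact hp
    obtain ⟨c, _, hc⟩ := this
    have h1 : (C c : Polynomial F).coeff 1 = (X - C g : Polynomial F).coeff 1 := by
      rw [hc]
    simp at h1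
  · intro hng
    -- key: fixed polynomials are constants
    have key : ∀ n : ℕ, ∀ p : Polynomial F, p.natDegree ≤ n → σ' p = p →
        ∃ c, σ c = c ∧ p = C c := by
      intro n
      induction n with
      | zero =>
        intro p hdeg hfix
        have hp : p = C (p.coeff 0) := eq_C_of_natDegree_le_zero hdeg
        refine ⟨p.coeff 0, ?_, hp⟩
        have := hfix
        rw [hp, hC] at this
        exact C_injective (by rw [← hp] at this ⊢; exact this)
      | succ n ih =>
        intro p hdeg hfix
        have hdfix : σ' (derivative p) = derivative p := by
          rw [← sigma_deriv F σ f σ' hC hX, hfix]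
        have hddeg : (derivative p).natDegree ≤ n := by
          have := natDegree_derivative_le p
          omega
        obtain ⟨c, hcfix, hcp⟩ := ih (derivative p) hddeg hdfix
        -- p has natDegree ≤ 1
        have hdeg1 : p.natDegree ≤ 1 := by
          by_contra hgt
          push_neg at hgt
          have hcoeff : (derivative p).coeff (p.natDegree - 1) = 0 := by
            rw [hcp]
            rw [coeff_C]
            exact if_neg (by omega)
          rw [coeff_derivative] at hcoeff
          have hsub : p.natDegree - 1 + 1 = p.natDegree := by omega
          rw [hsub] at hcoeff
          have hne : p ≠ 0 := by
            intro h0; rw [h0] at hgt; simp at hgt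
          have hlc : p.coeff p.natDegree ≠ 0 := by
            exact leadingCoeff_ne_zero.mpr hne
          have hnne : ((p.natDegree - 1 : ℕ) : F) + 1 ≠ 0 := by
            have h9 : (((p.natDegree - 1) + 1 : ℕ) : F) ≠ 0 :=
              Nat.cast_ne_zero.mpr (by omega)
            push_cast at h9
            exact h9
          rcases mul_eq_zero.mp hcoeff with h | h
          · exact hlc h
          · exact hnne h
        -- write p = C b * X + C d
        set b := p.coeff 1 with hb
        set d := p.coeff 0 with hd
        have hpform : p = C b * X + C d := eq_X_add_C_of_natDegree_le_one hdeg1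
        have hfix2 : C (σ b) * (X + C f) + C (σ d) = C b * X + C d := by
          have h2 := hfix
          rw [hpform] at h2
          rw [map_add, map_mul, hC, hC, hX] at h2
          exact h2
        have e1 : σ b = b := by
          have := congrArg (fun q => Polynomial.coeff q 1) hfix2
          simpa [coeff_C] using this
        have e0 : b * f + σ d = d := by
          have := congrArg (fun q => Polynomial.coeff q 0) hfix2
          simpa [coeff_C, e1] using this
        by_cases hb0 : b = 0
        · refine ⟨d, ?_, ?_⟩
          · rw [hb0] at e0; simpa using e0
          · rw [hpform, hb0]; simp
        · exact absurd ⟨-d / b, by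
            rw [map_div₀, map_neg, e1]
            field_simp
            linear_combination -1 * e0⟩ hng
    ext p
    constructor
    · intro hp
      obtain ⟨c, hc, hpc⟩ := key p.natDegree p le_rfl hp
      exact ⟨c, hc, hpc.symm⟩
    · rintro ⟨c, hc, rfl⟩
      simp only [Set.mem_setOf_eq] at hc ⊢
      rw [hC, hc]
end

section
/- Let (F, σ) be a difference field with constant field K = const(F,σ), let f ∈ F*, and let F[t, t^{-1}] be the Laurent polynomial ring with σ extended to a ring automorphism by σ(t) = f·t. Then const(F[t,t^{-1}], σ) = K if and only if there exist no g ∈ F \ {0} and m ∈ ℤ \ {0} with σ(g) = f^m · g. -/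
open LaurentPolynomial

theorem pi_extension_criterion
    (F : Type*) [Field F] (σ : F ≃+* F) (f : F) (hf : f ≠ 0)
    (τ : LaurentPolynomial F ≃+* LaurentPolynomial F)
    (hC : ∀ a : F, τ (LaurentPolynomial.C a) = LaurentPolynomial.C (σ a))
    (hT : τ (LaurentPolynomial.T 1) = LaurentPolynomial.C f * LaurentPolynomial.T 1) :
    ({p : LaurentPolynomial F | τ p = p}
        = LaurentPolynomial.C '' {c : F | σ c = c})
      ↔ ¬∃ g : F, g ≠ 0 ∧ ∃ m : ℤ, m ≠ 0 ∧ σ g = f ^ m * g := by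
  have hnat : ∀ k : ℕ, τ (T (k : ℤ)) = C (f ^ (k : ℤ)) * T (k : ℤ) := by
    intro k
    induction k with
    | zero => simp [T_zero]
    | succ k ih =>
      push_cast
      rw [T_add, map_mul, ih, hT, zpow_add₀ hf, map_mul, zpow_one]
      ring
  have hTn : ∀ n : ℤ, τ (T n : LaurentPolynomial F) = C (f ^ n) * T n := by
    intro n
    rcases le_or_gt 0 n with h | h
    · lift n to ℕ using h; exact hnat n
    · obtain ⟨k, rfl⟩ : ∃ k : ℕ, n = -(k : ℤ) := ⟨n.natAbs, by omega⟩
      have hu : IsUnit (τ (T (k : ℤ)) : LaurentPolynomial F) := (isUnit_T (k : ℤ)).map τ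
      have h1 : τ (T (-(k:ℤ))) * τ (T (k:ℤ)) = 1 := by
        rw [← map_mul, ← T_add, neg_add_cancel, T_zero, map_one]
      have h2 : (C (f ^ (-(k:ℤ))) * T (-(k:ℤ))) * τ (T (k:ℤ)) = 1 := by
        rw [hnat]
        calc C (f ^ (-(k:ℤ))) * T (-(k:ℤ)) * (C (f ^ (k:ℤ)) * T (k:ℤ))
            = (C (f ^ (-(k:ℤ))) * C (f ^ (k:ℤ))) * (T (-(k:ℤ)) * T (k:ℤ)) := by ring
          _ = 1 := by
            rw [← map_mul, ← T_add, ← zpow_add₀ hf, neg_add_cancel, T_zero, zpow_zero, map_one,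
              one_mul]
      exact hu.mul_right_cancel (h1.trans h2.symm)
  have hsingle : ∀ (n : ℤ) (a : F),
      τ (AddMonoidAlgebra.single n a : LaurentPolynomial F) = AddMonoidAlgebra.single n (σ a * f ^ n) := by
    intro n a
    rw [single_eq_C_mul_T, single_eq_C_mul_T, map_mul, hC, hTn, ← mul_assoc, ← map_mul]
  have hcoeff : ∀ (p : LaurentPolynomial F) (m : ℤ), (τ p).coeff m = σ (p.coeff m) * f ^ m := by
    intro p
    induction p using AddMonoidAlgebra.induction_linear with
    | zero => intro m; simp
    | add p q hp hq =>
      intro m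
      rw [map_add]
      show (τ p).coeff m + (τ q).coeff m = σ ((p + q).coeff m) * f ^ m
      have : (p + q).coeff m = p.coeff m + q.coeff m := rfl
      rw [hp, hq, this, map_add, add_mul]
    | single n a =>
      intro m
      rw [hsingle, AddMonoidAlgebra.coeff_single_apply, AddMonoidAlgebra.coeff_single_apply]
      split_ifs with hnm
      · rw [hnm]
      · simp
  constructor
  · intro hfix
    rintro ⟨g, hg, m, hm, hσ⟩
    set p : LaurentPolynomial F := C g⁻¹ * T m with hp
    have hkey : σ g⁻¹ * f ^ m = g⁻¹ := by
      rw [map_inv₀, hσ, mul_inv]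
      field_simp
    have hfp : τ p = p := by
      rw [hp, map_mul, hC, hTn, ← mul_assoc, ← map_mul, hkey]
    obtain ⟨c, _, hc⟩ := (Set.ext_iff.mp hfix p).mp hfp
    have h1 : p.coeff m = g⁻¹ := by
      rw [hp, ← single_eq_C_mul_T, AddMonoidAlgebra.coeff_single_apply, if_pos rfl]
    have h2 : (C c : LaurentPolynomial F).coeff m = 0 := by
      rw [← single_eq_C, AddMonoidAlgebra.coeff_single_apply, if_neg (fun h => hm h.symm)]
    rw [hc, h1] at h2
    exact inv_ne_zero hg h2
  · intro h
    ext p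
    simp only [Set.mem_setOf_eq, Set.mem_image]
    constructor
    · intro hfp
      have hco : ∀ m : ℤ, σ (p.coeff m) * f ^ m = p.coeff m := by
        intro m; rw [← hcoeff, hfp]
      have hzero : ∀ m : ℤ, m ≠ 0 → p.coeff m = 0 := by
        intro m hm
        by_contra hpm
        refine h ⟨(p.coeff m)⁻¹, inv_ne_zero hpm, m, hm, ?_⟩
        have hfm : f ^ m ≠ 0 := zpow_ne_zero m hf
        have h1 : σ (p.coeff m) = p.coeff m / f ^ m := by rw [eq_div_iff hfm]; exact hco m
        rw [map_inv₀, h1]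
        field_simp
      refine ⟨p.coeff 0, ?_, ?_⟩
      · have := hco 0; simpa using this
      · ext m
        rcases eq_or_ne m 0 with rfl | hm
        · rw [← single_eq_C]; simp
        · rw [← single_eq_C, AddMonoidAlgebra.coeff_single_apply, hzero m hm,
            if_neg (fun hh => hm hh.symm)]
    · rintro ⟨c, hc, rfl⟩
      rw [hC, hc]
end
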